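/- Let ε₁, ε₂ ∈ {−1, +1} and consider the 3×3 symmetric matrix P̂(p) on ℝ³ with entries P̂₁₁ = d₁² ε₁ p₃^{k−1}, P̂₁₂ = 0, P̂₂₂ = d₂² ε₂ p₃^{k−1}, P̂₁₃ = 2d₁p₁, P̂₂₃ = 2d₂p₂, P̂₃₃ = 4p₃ (with d₁ = d₂ = k ≥ 2). Define Z = {p ∈ ℝ³ : ε₁ p₁² + ε₂ p₂² = p₃^k}. Then the set {p ∈ Z ∩ {p₃ = 1} : P̂(p) ⪰ 0 and rank P̂(p) = 2} is nonempty and connected if and only if ε₁ = ε₂ = 1, in which case it equals the unit circle {p₁² + p₂² = 1, p₃ = 1}. -/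

import Mathlib

open Matrix Real

lemma S3aux (c a b : ℝ) (hc : 0 < c) (hab : a^2 + b^2 = 1) :
    (!![c^2, 0, 2*c*a; 0, c^2, 2*c*b; 2*c*a, 2*c*b, 4] : Matrix (Fin 3) (Fin 3) ℝ).PosSemidef ∧
    (!![c^2, 0, 2*c*a; 0, c^2, 2*c*b; 2*c*a, 2*c*b, 4] : Matrix (Fin 3) (Fin 3) ℝ).rank = 2 := by
  set M : Matrix (Fin 3) (Fin 3) ℝ := !![c^2, 0, 2*c*a; 0, c^2, 2*c*b; 2*c*a, 2*c*b, 4] with hM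
  constructor
  · refine Matrix.PosSemidef.of_dotProduct_mulVec_nonneg ?_ ?_
    · ext i j
      fin_cases i <;> fin_cases j <;> simp [hM, Matrix.conjTranspose_apply]
    · intro x
      simp only [star_trivial]
      simp [hM, dotProduct, Matrix.mulVec, Fin.sum_univ_three]
      nlinarith [sq_nonneg (c * x 0 + 2*a*x 2), sq_nonneg (c * x 1 + 2*b*x 2), sq_nonneg (x 2)]
  · have hker : LinearMap.ker M.mulVecLin = Submodule.span ℝ {![2*a, 2*b, -c]} := by
      apply le_antisymm
      · intro x hx
        rw [LinearMap.mem_ker] at hx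
        have h0 := congrFun hx 0
        have h1 := congrFun hx 1
        simp [hM, Matrix.mulVecLin_apply, Matrix.mulVec, dotProduct, Fin.sum_univ_three] at h0 h1
        refine Submodule.mem_span_singleton.mpr ⟨-(x 2)/c, ?_⟩
        funext i
        fin_cases i <;> simp [Pi.smul_apply, smul_eq_mul] <;> field_simp <;> nlinarith [hc]
      · rw [Submodule.span_le, Set.singleton_subset_iff, SetLike.mem_coe, LinearMap.mem_ker]
        funext i
        fin_cases i <;>
          simp [hM, Matrix.mulVecLin_apply, Matrix.mulVec, dotProduct, Fin.sum_univ_three] <;>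
          nlinarith [hc]
    have hw : (![2*a, 2*b, -c] : Fin 3 → ℝ) ≠ 0 := by
      intro h
      have := congrFun h 2
      simp at this
      linarith
    have hk1 : Module.finrank ℝ (LinearMap.ker M.mulVecLin) = 1 := by
      rw [hker]; exact finrank_span_singleton hw
    have hrn := LinearMap.finrank_range_add_finrank_ker M.mulVecLin
    have hdom : Module.finrank ℝ (Fin 3 → ℝ) = 3 := by simp
    rw [Matrix.rank]
    omega

lemma S3circ_range : {p : Fin 3 → ℝ | (p 0)^2 + (p 1)^2 = 1 ∧ p 2 = 1} =
    Set.range (fun t : ℝ => ![Real.cos t, Real.sin t, 1]) := by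
  ext p
  constructor
  · rintro ⟨h1, h2⟩
    have ha1 : -1 ≤ p 0 := by nlinarith
    have ha2 : p 0 ≤ 1 := by nlinarith
    rcases le_or_gt 0 (p 1) with hb | hb
    · refine ⟨Real.arccos (p 0), ?_⟩
      have hs : Real.sin (Real.arccos (p 0)) = p 1 := by
        rw [Real.sin_arccos, show 1 - p 0 ^ 2 = p 1 ^ 2 by linarith, Real.sqrt_sq hb]
      funext i
      fin_cases i
      · simp [Real.cos_arccos ha1 ha2]
      · simp [hs]
      · simp [h2]
    · refine ⟨-Real.arccos (p 0), ?_⟩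
      have hs : Real.sin (-Real.arccos (p 0)) = p 1 := by
        rw [Real.sin_neg, Real.sin_arccos, show 1 - p 0 ^ 2 = p 1 ^ 2 by linarith,
          Real.sqrt_sq_eq_abs, abs_of_neg hb]
        ring
      funext i
      fin_cases i
      · simp [Real.cos_arccos ha1 ha2]
      · simp [hs]
      · simp [h2]
  · rintro ⟨t, rfl⟩
    refine ⟨?_, rfl⟩
    simp [Real.cos_sq_add_sin_sq]

lemma S3conn : IsConnected {p : Fin 3 → ℝ | (p 0)^2 + (p 1)^2 = 1 ∧ p 2 = 1} := by
  rw [S3circ_range]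
  apply isConnected_range
  apply continuous_pi
  intro i
  fin_cases i <;> simp <;> fun_prop
theorem solution_S3_allowable (ε₁ ε₂ : ℝ) (hε₁ : ε₁ = 1 ∨ ε₁ = -1)
    (hε₂ : ε₂ = 1 ∨ ε₂ = -1) (k : ℕ) (hk : 2 ≤ k) :
    let P : (Fin 3 → ℝ) → Matrix (Fin 3) (Fin 3) ℝ := fun p =>
      !![(k : ℝ) ^ 2 * ε₁ * (p 2) ^ (k - 1), 0, 2 * (k : ℝ) * p 0;
         0, (k : ℝ) ^ 2 * ε₂ * (p 2) ^ (k - 1), 2 * (k : ℝ) * p 1;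
         2 * (k : ℝ) * p 0, 2 * (k : ℝ) * p 1, 4 * p 2]
    let S : Set (Fin 3 → ℝ) := {p | ε₁ * (p 0) ^ 2 + ε₂ * (p 1) ^ 2 = (p 2) ^ k ∧
      p 2 = 1 ∧ (P p).PosSemidef ∧ (P p).rank = 2}
    ((S.Nonempty ∧ IsConnected S) ↔ (ε₁ = 1 ∧ ε₂ = 1)) ∧
    ((ε₁ = 1 ∧ ε₂ = 1) →
      S = {p : Fin 3 → ℝ | (p 0) ^ 2 + (p 1) ^ 2 = 1 ∧ p 2 = 1}) := by
  intro P S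
  have hkR : (2 : ℝ) ≤ (k : ℝ) := by exact_mod_cast hk
  have hkpos : (0 : ℝ) < (k : ℝ) := by linarith
  -- the set equality in the positive case
  have hSeq : (ε₁ = 1 ∧ ε₂ = 1) →
      S = {p : Fin 3 → ℝ | (p 0) ^ 2 + (p 1) ^ 2 = 1 ∧ p 2 = 1} := by
    rintro ⟨rfl, rfl⟩
    ext p
    simp only [S, P, Set.mem_setOf_eq]
    constructor
    · rintro ⟨hz, h2, -, -⟩
      rw [h2, one_pow] at hz
      constructor
      · linarith [hz]
      · exact h2
    · rintro ⟨hc, h2⟩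
      have hPM : !![(k : ℝ) ^ 2 * 1 * (p 2) ^ (k - 1), 0, 2 * (k : ℝ) * p 0;
           0, (k : ℝ) ^ 2 * 1 * (p 2) ^ (k - 1), 2 * (k : ℝ) * p 1;
           2 * (k : ℝ) * p 0, 2 * (k : ℝ) * p 1, 4 * p 2] =
          !![(k:ℝ)^2, 0, 2*(k:ℝ)*(p 0); 0, (k:ℝ)^2, 2*(k:ℝ)*(p 1);
             2*(k:ℝ)*(p 0), 2*(k:ℝ)*(p 1), 4] := by
        rw [h2]; norm_num
      have haux := S3aux (k : ℝ) (p 0) (p 1) hkpos hc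
      refine ⟨by rw [h2]; norm_num; linarith [hc], h2, ?_, ?_⟩
      · rw [hPM]; exact haux.1
      · rw [hPM]; exact haux.2
  refine ⟨?_, hSeq⟩
  constructor
  · rintro ⟨hne, -⟩
    -- if some sign is -1, S is empty
    by_contra hcon
    have hS_empty : S = ∅ := by
      ext p
      simp only [S, P, Set.mem_setOf_eq, Set.mem_empty_iff_false, iff_false]
      rintro ⟨hz, h2, hpsd, -⟩
      have hd1 := hpsd.dotProduct_mulVec_nonneg (Pi.single 0 1)
      have hd2 := hpsd.dotProduct_mulVec_nonneg (Pi.single 1 1)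
      simp [dotProduct, Matrix.mulVec, Fin.sum_univ_three, Pi.single, h2] at hd1 hd2
      have hk2 : (0:ℝ) < (k:ℝ)^2 := by positivity
      have h1 : ε₁ = 1 := by
        rcases hε₁ with h | h
        · exact h
        · exfalso; rw [h] at hd1; nlinarith
      have h2' : ε₂ = 1 := by
        rcases hε₂ with h | h
        · exact h
        · exfalso; rw [h] at hd2; nlinarith
      exact hcon ⟨h1, h2'⟩
    rw [hS_empty] at hne
    exact Set.not_nonempty_empty hne
  · intro h
    rw [hSeq h]
    exact ⟨⟨![1, 0, 1], by norm_num, rfl⟩, S3conn⟩
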